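/- Let gamma ∈ (0,1) and N ≥ 4. For Y_0 = +∞ (i.e., terms with Y_0 omitted), Y_N = +∞ and Y_1, ..., Y_{N-1} > 0, define J^1(Y) = sum over i of (Y_i^{-(gamma+1)} - Y_{i-1}^{-(gamma+1)})^2 with the boundary convention that infinite gaps contribute 0, and let J^2(Y) = sum_{i} sum_{|j-i| ≥ 2} sgn(X_j - X_i)|X_j - X_i|^{-(gamma+1)} (Y_i^{-(gamma+1)} - Y_{i-1}^{-(gamma+1)}) where X is any strictly increasing tuple with gaps Y_i = X_{i+1} - X_i. Then J^2(Y) ≤ 2(N-2)^2 J^1(Y). -/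

import Mathlib

open Finset Real

theorem stmt_19 (γ : ℝ) (hγ : γ ∈ Set.Ioo (0 : ℝ) 1) (N : ℕ) (hN : 4 ≤ N)
    (X Y g : ℕ → ℝ)
    (hX : ∀ i, 1 ≤ i → i < N → X i < X (i + 1))
    (hY : ∀ i, Y i = X (i + 1) - X i)
    (hg : ∀ i, g i = if 1 ≤ i ∧ i ≤ N - 1 then (Y i) ^ (-(γ + 1)) else 0) :
    ∑ i ∈ Finset.Icc 1 N, ∑ j ∈ Finset.Icc 1 N,
        (if i + 2 ≤ j ∨ j + 2 ≤ i then
          Real.sign (X j - X i) * |X j - X i| ^ (-(γ + 1)) * (g i - g (i - 1))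
        else 0) ≤
      2 * ((N : ℝ) - 2) ^ 2 * ∑ i ∈ Finset.Icc 1 N, (g i - g (i - 1)) ^ 2 := by
  obtain ⟨hγ0, hγ1⟩ := hγ
  have hexp : -(γ + 1) ≤ 0 := by linarith
  -- strict monotonicity
  have smono : ∀ p q, 1 ≤ p → p < q → q ≤ N → X p < X q := by
    intro p q hp hpq hqN
    have H : ∀ n, p + 1 ≤ n → n ≤ N → X p < X n := by
      intro n hn
      induction n, hn using Nat.le_induction with
      | base => intro h; exact hX p hp (by omega)
      | succ n hn ih =>
        intro h
        exact (ih (by omega)).trans (hX n (by omega) (by omega))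
    exact H q hpq hqN
  set a : ℕ → ℝ := fun i => g i - g (i - 1) with ha
  set T : ℝ := ∑ k ∈ Finset.Icc 1 N, |a k| with hTdef
  have hTnn : 0 ≤ T := Finset.sum_nonneg fun k _ => abs_nonneg _
  have g0 : g 0 = 0 := by rw [hg]; exact if_neg (by omega)
  have gN : g N = 0 := by rw [hg]; exact if_neg (by omega)
  -- telescoping
  have tel : ∀ m n : ℕ, m ≤ n → ∑ k ∈ Finset.Ioc m n, a k = g n - g m := by
    intro m n h
    induction n, h using Nat.le_induction with
    | base => simp
    | succ n h ih =>
      rw [Finset.sum_Ioc_succ_top (by omega), ih]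
      have : n + 1 - 1 = n := by omega
      simp only [ha, this]
      ring
  have hTIoc : T = ∑ k ∈ Finset.Ioc 0 N, |a k| := by
    rw [hTdef, ← Finset.Icc_add_one_left_eq_Ioc, zero_add]
  -- g i ≤ T / 2
  have hgT : ∀ i, g i ≤ T / 2 := by
    intro i
    rcases le_or_gt i N with hiN | hiN
    · have h1 := tel 0 i (Nat.zero_le _)
      have h2 := tel i N hiN
      have e : (∑ k ∈ Finset.Ioc 0 i, |a k|) + ∑ k ∈ Finset.Ioc i N, |a k|
          = ∑ k ∈ Finset.Ioc 0 N, |a k| :=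
        Finset.sum_Ioc_consecutive _ (Nat.zero_le _) hiN
      have b1 : g i - g 0 ≤ ∑ k ∈ Finset.Ioc 0 i, |a k| := by
        rw [← h1]; exact Finset.sum_le_sum fun k _ => le_abs_self _
      have b2 : -(g N - g i) ≤ ∑ k ∈ Finset.Ioc i N, |a k| := by
        rw [← h2, ← Finset.sum_neg_distrib]
        exact Finset.sum_le_sum fun k _ => neg_le_abs _
      rw [hTIoc]
      linarith
    · have : g i = 0 := by rw [hg]; exact if_neg (by omega)
      linarith
  have hgnn : ∀ i, 0 ≤ g i := by
    intro i
    rw [hg]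
    split_ifs with h
    · have hYi : 0 < Y i := by
        rw [hY]
        have := hX i h.1 (by omega)
        linarith
      exact (Real.rpow_pos_of_pos hYi _).le
    · exact le_refl 0
  -- key pointwise estimate
  have key : ∀ i j : ℕ, 1 ≤ i → i ≤ N → 1 ≤ j → j ≤ N → (i + 2 ≤ j ∨ j + 2 ≤ i) →
      Real.sign (X j - X i) * |X j - X i| ^ (-(γ + 1)) * a i ≤ T / 2 * |a i| := by
    intro i j hi hiN hj hjN hcond
    rcases hcond with h | h
    · -- j ≥ i + 2
      have hlt : X i < X j := smono i j hi (by omega) hjN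
      have hsign : Real.sign (X j - X i) = 1 := Real.sign_of_pos (by linarith)
      have habs : |X j - X i| = X j - X i := abs_of_pos (by linarith)
      have hYi : 0 < Y i := by
        rw [hY]
        have := hX i hi (by omega)
        linarith
      have hstep : X (i + 1) < X j := smono (i + 1) j (by omega) (by omega) hjN
      have hle : Y i ≤ X j - X i := by rw [hY]; linarith
      have hpow : (X j - X i) ^ (-(γ + 1)) ≤ Y i ^ (-(γ + 1)) :=
        Real.rpow_le_rpow_of_nonpos hYi hle hexp
      have hgi : g i = Y i ^ (-(γ + 1)) := by
        rw [hg]; exact if_pos ⟨hi, by omega⟩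
      have hcnn : 0 ≤ (X j - X i) ^ (-(γ + 1)) := Real.rpow_nonneg (by linarith) _
      have hcle : (X j - X i) ^ (-(γ + 1)) ≤ T / 2 := by
        rw [← hgi] at hpow
        exact hpow.trans (hgT i)
      rw [hsign, habs, one_mul]
      calc (X j - X i) ^ (-(γ + 1)) * a i
          ≤ (X j - X i) ^ (-(γ + 1)) * |a i| :=
            mul_le_mul_of_nonneg_left (le_abs_self _) hcnn
        _ ≤ T / 2 * |a i| := mul_le_mul_of_nonneg_right hcle (abs_nonneg _)
    · -- i ≥ j + 2
      have hlt : X j < X i := smono j i hj (by omega) hiN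
      have hsign : Real.sign (X j - X i) = -1 := Real.sign_of_neg (by linarith)
      have habs : |X j - X i| = X i - X j := by rw [abs_of_neg (by linarith)]; ring
      set m := i - 1 with hm
      have hm1 : m + 1 = i := by omega
      have hYm : 0 < Y m := by
        rw [hY]
        have := hX m (by omega) (by omega)
        linarith
      have hstep : X j < X m := smono j m hj (by omega) (by omega)
      have hle : Y m ≤ X i - X j := by rw [hY, hm1]; linarith
      have hgm : g m = Y m ^ (-(γ + 1)) := by
        rw [hg]; exact if_pos ⟨by omega, by omega⟩
      have hpow : (X i - X j) ^ (-(γ + 1)) ≤ Y m ^ (-(γ + 1)) :=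
        Real.rpow_le_rpow_of_nonpos hYm hle hexp
      have hcnn : 0 ≤ (X i - X j) ^ (-(γ + 1)) := Real.rpow_nonneg (by linarith) _
      have hcle : (X i - X j) ^ (-(γ + 1)) ≤ T / 2 := by
        rw [← hgm] at hpow
        exact hpow.trans (hgT m)
      rw [hsign, habs]
      calc -1 * (X i - X j) ^ (-(γ + 1)) * a i
          = (X i - X j) ^ (-(γ + 1)) * (-a i) := by ring
        _ ≤ (X i - X j) ^ (-(γ + 1)) * |a i| :=
            mul_le_mul_of_nonneg_left (neg_le_abs _) hcnn
        _ ≤ T / 2 * |a i| := mul_le_mul_of_nonneg_right hcle (abs_nonneg _)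
  -- count bound
  have hcard : ∀ i ∈ Finset.Icc 1 N,
      ((Finset.Icc 1 N).filter (fun j => i + 2 ≤ j ∨ j + 2 ≤ i)).card ≤ N - 2 := by
    intro i hi
    rw [Finset.mem_Icc] at hi
    obtain ⟨e1, e2, he1, he2, hne, hc1, hc2⟩ :
        ∃ e1 e2, e1 ∈ Finset.Icc 1 N ∧ e2 ∈ Finset.Icc 1 N ∧ e1 ≠ e2 ∧
          ¬(i + 2 ≤ e1 ∨ e1 + 2 ≤ i) ∧ ¬(i + 2 ≤ e2 ∨ e2 + 2 ≤ i) := by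
      rcases lt_or_eq_of_le hi.2 with h | h
      · exact ⟨i, i + 1, Finset.mem_Icc.2 ⟨hi.1, by omega⟩,
          Finset.mem_Icc.2 ⟨by omega, by omega⟩, by omega, by omega, by omega⟩
      · exact ⟨N - 1, N, Finset.mem_Icc.2 ⟨by omega, by omega⟩,
          Finset.mem_Icc.2 ⟨by omega, le_refl _⟩, by omega, by omega, by omega⟩
    have hsub : (Finset.Icc 1 N).filter (fun j => i + 2 ≤ j ∨ j + 2 ≤ i)
        ⊆ ((Finset.Icc 1 N).erase e1).erase e2 := by
      intro j hjmem
      rw [Finset.mem_filter] at hjmem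
      rw [Finset.mem_erase, Finset.mem_erase]
      refine ⟨?_, ?_, hjmem.1⟩
      · rintro rfl; exact hc2 hjmem.2
      · rintro rfl; exact hc1 hjmem.2
    have := Finset.card_le_card hsub
    rw [Finset.card_erase_of_mem (Finset.mem_erase.2 ⟨hne.symm, he2⟩),
      Finset.card_erase_of_mem he1, Nat.card_Icc] at this
    omega
  -- inner sum bound
  have inner : ∀ i ∈ Finset.Icc 1 N,
      (∑ j ∈ Finset.Icc 1 N, (if i + 2 ≤ j ∨ j + 2 ≤ i then
          Real.sign (X j - X i) * |X j - X i| ^ (-(γ + 1)) * a i else 0))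
        ≤ ((N : ℝ) - 2) * (T / 2 * |a i|) := by
    intro i hi
    rw [Finset.mem_Icc] at hi
    have step1 : (∑ j ∈ Finset.Icc 1 N, (if i + 2 ≤ j ∨ j + 2 ≤ i then
          Real.sign (X j - X i) * |X j - X i| ^ (-(γ + 1)) * a i else 0))
        ≤ ∑ j ∈ Finset.Icc 1 N, (if i + 2 ≤ j ∨ j + 2 ≤ i then T / 2 * |a i| else 0) := by
      refine Finset.sum_le_sum fun j hj => ?_
      rw [Finset.mem_Icc] at hj
      split_ifs with h
      · exact key i j hi.1 hi.2 hj.1 hj.2 h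
      · exact le_refl 0
    have step2 : ∑ j ∈ Finset.Icc 1 N, (if i + 2 ≤ j ∨ j + 2 ≤ i then T / 2 * |a i| else 0)
        = (((Finset.Icc 1 N).filter (fun j => i + 2 ≤ j ∨ j + 2 ≤ i)).card : ℝ)
          * (T / 2 * |a i|) := by
      rw [Finset.sum_ite, Finset.sum_const, Finset.sum_const_zero, add_zero, nsmul_eq_mul]
    have hcnn : 0 ≤ T / 2 * |a i| :=
      mul_nonneg (by linarith) (abs_nonneg _)
    have step3 : (((Finset.Icc 1 N).filter (fun j => i + 2 ≤ j ∨ j + 2 ≤ i)).card : ℝ)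
          * (T / 2 * |a i|) ≤ ((N : ℝ) - 2) * (T / 2 * |a i|) := by
      refine mul_le_mul_of_nonneg_right ?_ hcnn
      have h1 := hcard i (Finset.mem_Icc.2 hi)
      have h2 : (((Finset.Icc 1 N).filter (fun j => i + 2 ≤ j ∨ j + 2 ≤ i)).card : ℝ)
          ≤ ((N - 2 : ℕ) : ℝ) := Nat.cast_le.2 h1
      have h3 : ((N - 2 : ℕ) : ℝ) = (N : ℝ) - 2 := by
        rw [Nat.cast_sub (by omega)]; norm_num
      linarith
    calc _ ≤ _ := step1
      _ = _ := step2
      _ ≤ _ := step3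
  -- Cauchy-Schwarz
  set S : ℝ := ∑ i ∈ Finset.Icc 1 N, a i ^ 2 with hSdef
  have hSnn : 0 ≤ S := Finset.sum_nonneg fun i _ => sq_nonneg _
  have hT2 : T ^ 2 ≤ (N : ℝ) * S := by
    have hcs := Finset.sum_mul_sq_le_sq_mul_sq (Finset.Icc 1 N)
      (fun _ => (1 : ℝ)) (fun k => |a k|)
    simp only [one_mul, one_pow] at hcs
    rw [Finset.sum_const, Nat.card_Icc, nsmul_eq_mul, mul_one] at hcs
    have habs2 : ∑ k ∈ Finset.Icc 1 N, |a k| ^ 2 = S := by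
      rw [hSdef]
      exact Finset.sum_congr rfl fun k _ => sq_abs _
    rw [habs2] at hcs
    have : ((N + 1 - 1 : ℕ) : ℝ) = (N : ℝ) := by norm_num
    rw [this] at hcs
    exact hcs
  -- assemble
  have main : (∑ i ∈ Finset.Icc 1 N, ∑ j ∈ Finset.Icc 1 N,
        (if i + 2 ≤ j ∨ j + 2 ≤ i then
          Real.sign (X j - X i) * |X j - X i| ^ (-(γ + 1)) * a i
        else 0)) ≤ ((N : ℝ) - 2) * (T / 2) * T := by
    calc (∑ i ∈ Finset.Icc 1 N, ∑ j ∈ Finset.Icc 1 N,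
        (if i + 2 ≤ j ∨ j + 2 ≤ i then
          Real.sign (X j - X i) * |X j - X i| ^ (-(γ + 1)) * a i
        else 0)) ≤ ∑ i ∈ Finset.Icc 1 N, ((N : ℝ) - 2) * (T / 2 * |a i|) :=
          Finset.sum_le_sum inner
      _ = ((N : ℝ) - 2) * (T / 2) * ∑ i ∈ Finset.Icc 1 N, |a i| := by
          rw [Finset.mul_sum]
          exact Finset.sum_congr rfl fun i _ => by ring
      _ = ((N : ℝ) - 2) * (T / 2) * T := by rw [← hTdef]
  have hN4 : (4 : ℝ) ≤ (N : ℝ) := by exact_mod_cast hN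
  have final : ((N : ℝ) - 2) * (T / 2) * T ≤ 2 * ((N : ℝ) - 2) ^ 2 * S := by
    nlinarith [hT2, hSnn, hTnn, sq_nonneg ((N:ℝ) - 2), mul_nonneg hSnn (by linarith : (0:ℝ) ≤ (N:ℝ) - 2)]
  exact main.trans final
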